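/- For integers n≥0 and s,r≥2, one has Σ_{a+b=n} ζ*({s}^a)·ζ(sb+r) = Σ_{a+b=n} ζ*({s}^a, r, {s}^b), where the sums are over nonnegative integers a,b with a+b=n. -/

import Mathlib

set_option maxHeartbeats 1000000


open scoped BigOperators
open scoped ENNReal

/-- Multiple zeta value ζ(α 0, ..., α (r-1)). -/
noncomputable def mzv {r : ℕ} (α : Fin r → ℕ) : ℝ :=
  ∑' f : {f : Fin r → ℕ // StrictMono f ∧ ∀ i, 0 < f i},
    ∏ i, ((f.1 i : ℝ) ^ (α i))⁻¹

/-- Multiple zeta-star value ζ*(α 0, ..., α (r-1)). -/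
noncomputable def mzs {r : ℕ} (α : Fin r → ℕ) : ℝ :=
  ∑' f : {f : Fin r → ℕ // Monotone f ∧ ∀ i, 0 < f i},
    ∏ i, ((f.1 i : ℝ) ^ (α i))⁻¹

/-- Riemann zeta value ζ(s) for integer s. -/
noncomputable def rz (s : ℕ) : ℝ := ∑' k : ℕ+, ((k : ℝ) ^ s)⁻¹

/-- The Euler sum G_{n+2}(p,q);  `G n p q` corresponds to G_{n+2}(p,q). -/
noncomputable def G (n p q : ℕ) : ℝ :=
  ∑' x : {fg : (Fin (p + 1) → ℕ) × (Fin q → ℕ) //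
      StrictMono fg.1 ∧ (∀ i, 0 < fg.1 i) ∧ Monotone fg.2 ∧
      (∀ j, 0 < fg.2 j) ∧ ∀ j, fg.2 j ≤ fg.1 (Fin.last p)},
    ((∏ i : Fin p, ((x.1.1 i.castSucc : ℝ))⁻¹) *
      ((x.1.1 (Fin.last p) : ℝ) ^ (n + 2))⁻¹) *
      ∏ j : Fin q, ((x.1.2 j : ℝ))⁻¹

/-- {1}^m : m repetitions of 1. -/
def ones (m : ℕ) : Fin m → ℕ := fun _ => 1
/-- {2}^m : m repetitions of 2. -/
def twos (m : ℕ) : Fin m → ℕ := fun _ => 2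
/-- the exponent string ({2}^a, 3, {2}^b). -/
def z23 (a b : ℕ) : Fin (a + 1 + b) → ℕ :=
  Fin.append (Fin.append (twos a) ![3]) (twos b)

namespace S4


def CL (a L : ℕ) := {f : Fin a → ℕ // Monotone f ∧ ∀ i, L ≤ f i}
def CB (a L M : ℕ) := {f : Fin a → ℕ // Monotone f ∧ ∀ i, L ≤ f i ∧ f i ≤ M}

lemma key {a M : ℕ} (f : Fin a → ℕ) (hf : Monotone f) (i : Fin a) :
    f i ≤ M ↔ i.1 < (Finset.univ.filter fun j : Fin a => f j ≤ M).card := by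
  constructor
  · intro h
    have hsub : Finset.Iic i ⊆ Finset.univ.filter fun j : Fin a => f j ≤ M := by
      intro j hj
      simp only [Finset.mem_Iic] at hj
      simp only [Finset.mem_filter, Finset.mem_univ, true_and]
      exact le_trans (hf hj) h
    have hc := Finset.card_le_card hsub
    rw [Fin.card_Iic] at hc
    omega
  · intro h
    by_contra hM
    have hsub : (Finset.univ.filter fun j : Fin a => f j ≤ M) ⊆ Finset.Iio i := by
      intro j hj
      simp only [Finset.mem_filter, Finset.mem_univ, true_and] at hj
      simp only [Finset.mem_Iio]
      by_contra hji
      push_neg at hji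
      exact hM (le_trans (hf hji) hj)
    have hc := Finset.card_le_card hsub
    rw [Fin.card_Iio] at hc
    omega

lemma card_lt {a k : ℕ} (hk : k ≤ a) :
    (Finset.univ.filter fun t : Fin a => t.1 < k).card = k := by
  rw [← Fintype.card_subtype]
  have e : {t : Fin a // t.1 < k} ≃ Fin k :=
    { toFun := fun t => ⟨t.1.1, t.2⟩
      invFun := fun u => ⟨⟨u.1, lt_of_lt_of_le u.2 hk⟩, u.2⟩
      left_inv := fun t => by ext; rfl
      right_inv := fun u => rfl }
  rw [Fintype.card_congr e, Fintype.card_fin]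

/-- the number of entries of f that are `≤ M`. -/
def cnt {a : ℕ} (M : ℕ) (f : Fin a → ℕ) : ℕ :=
  (Finset.univ.filter fun j : Fin a => f j ≤ M).card

lemma cnt_le {a M : ℕ} (f : Fin a → ℕ) : cnt M f ≤ a := by
  have := Finset.card_filter_le Finset.univ (fun j : Fin a => f j ≤ M)
  simpa [cnt] using this

/-- glue a bounded chain and a lower-bounded chain. -/
def glue {a L M : ℕ} (i : Fin (a + 1)) (g : CB i.1 L M) (h : CL (a - i.1) (M + 1)) :
    Fin a → ℕ :=
  fun t => if ht : t.1 < i.1 then g.1 ⟨t.1, ht⟩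
    else h.1 ⟨t.1 - i.1, by have := t.2; omega⟩

lemma glue_lt {a L M : ℕ} (i : Fin (a + 1)) (g : CB i.1 L M) (h : CL (a - i.1) (M + 1))
    (t : Fin a) (ht : t.1 < i.1) : glue i g h t = g.1 ⟨t.1, ht⟩ := dif_pos ht

lemma glue_ge {a L M : ℕ} (i : Fin (a + 1)) (g : CB i.1 L M) (h : CL (a - i.1) (M + 1))
    (t : Fin a) (ht : ¬ t.1 < i.1) :
    glue i g h t = h.1 ⟨t.1 - i.1, by have := t.2; omega⟩ := dif_neg ht

lemma glue_le_M {a L M : ℕ} (i : Fin (a + 1)) (g : CB i.1 L M) (h : CL (a - i.1) (M + 1))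
    (t : Fin a) : glue i g h t ≤ M ↔ t.1 < i.1 := by
  by_cases ht : t.1 < i.1
  · rw [glue_lt i g h t ht]
    simp only [ht, iff_true]
    exact (g.2.2 _).2
  · rw [glue_ge i g h t ht]
    simp only [ht, iff_false, not_le]
    exact lt_of_lt_of_le (Nat.lt_succ_self M) (h.2.2 _)

lemma glue_mono {a L M : ℕ} (i : Fin (a + 1)) (g : CB i.1 L M) (h : CL (a - i.1) (M + 1)) :
    Monotone (glue i g h) := by
  intro t u htu
  have htu' : t.1 ≤ u.1 := htu
  by_cases ht : t.1 < i.1 <;> by_cases hu : u.1 < i.1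
  · rw [glue_lt i g h t ht, glue_lt i g h u hu]
    exact g.2.1 (show (⟨t.1, ht⟩ : Fin i.1) ≤ ⟨u.1, hu⟩ from htu')
  · rw [glue_lt i g h t ht, glue_ge i g h u hu]
    exact le_trans (g.2.2 _).2 (le_trans (Nat.le_succ M) (h.2.2 _))
  · omega
  · rw [glue_ge i g h t ht, glue_ge i g h u hu]
    exact h.2.1 (show t.1 - i.1 ≤ u.1 - i.1 by omega)

lemma glue_lower {a L M : ℕ} (hLM : L ≤ M + 1) (i : Fin (a + 1)) (g : CB i.1 L M)
    (h : CL (a - i.1) (M + 1)) (t : Fin a) : L ≤ glue i g h t := by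
  by_cases ht : t.1 < i.1
  · rw [glue_lt i g h t ht]; exact (g.2.2 _).1
  · rw [glue_ge i g h t ht]; exact le_trans hLM (h.2.2 _)

lemma cnt_glue {a L M : ℕ} (i : Fin (a + 1)) (g : CB i.1 L M) (h : CL (a - i.1) (M + 1)) :
    cnt M (glue i g h) = i.1 := by
  unfold cnt
  rw [Finset.filter_congr (fun t _ => by rw [glue_le_M i g h t])]
  exact card_lt (by have := i.2; omega)

/-- the first part of the split of a chain. -/
def front {a : ℕ} (L M : ℕ) (f : CL a L) : CB (cnt M f.1) L M :=
  ⟨fun u => f.1 ⟨u.1, lt_of_lt_of_le u.2 (cnt_le (M := M) f.1)⟩,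
    fun u v huv => f.2.1 (show (⟨u.1, _⟩ : Fin a) ≤ ⟨v.1, _⟩ from huv),
    fun u => ⟨f.2.2 _, (key f.1 f.2.1 _).mpr u.2⟩⟩

/-- the second part of the split of a chain. -/
def back {a : ℕ} (L M : ℕ) (f : CL a L) : CL (a - cnt M f.1) (M + 1) :=
  ⟨fun v => f.1 ⟨cnt M f.1 + v.1, by
      have hv : v.1 < a - cnt M f.1 := v.2
      omega⟩,
    fun u v huv => f.2.1 (show (⟨cnt M f.1 + u.1, _⟩ : Fin a) ≤ ⟨cnt M f.1 + v.1, _⟩ from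
      Nat.add_le_add_left huv _),
    fun v => by
      have hidx : cnt M f.1 + v.1 < a := by have hv : v.1 < a - cnt M f.1 := v.2; omega
      by_contra hle
      push_neg at hle
      have h2 := (key f.1 f.2.1 ⟨_, hidx⟩).mp (Nat.lt_succ_iff.mp hle)
      have h3 : cnt M f.1 + v.1 < cnt M f.1 := h2
      omega⟩

/-- the index type for the split. -/
def SIdx (a L M : ℕ) := Σ i : Fin (a + 1), CB i.1 L M × CL (a - i.1) (M + 1)

/-- gluing map: the inverse of splitting. -/
def glueMap {a L M : ℕ} (hLM : L ≤ M + 1) : SIdx a L M → CL a L :=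
  fun x => ⟨glue x.1 x.2.1 x.2.2, glue_mono _ _ _, glue_lower hLM _ _ _⟩

lemma glueMap_front_back {a L M : ℕ} (hLM : L ≤ M + 1) (f : CL a L) :
    glueMap hLM ⟨⟨cnt M f.1, Nat.lt_succ_of_le (cnt_le f.1)⟩, front L M f, back L M f⟩ = f := by
  apply Subtype.ext
  funext t
  show glue _ _ _ t = f.1 t
  by_cases ht : t.1 < cnt M f.1
  · rw [glue_lt _ _ _ t ht]
    rfl
  · rw [glue_ge _ _ _ t ht]
    show f.1 _ = f.1 t
    refine congrArg f.1 (Fin.ext ?_)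
    show cnt M f.1 + (t.1 - cnt M f.1) = t.1
    omega

lemma glueMap_bijective {a L M : ℕ} (hLM : L ≤ M + 1) :
    Function.Bijective (glueMap (a := a) hLM) := by
  constructor
  · rintro ⟨i, g, h⟩ ⟨i', g', h'⟩ heq
    have hval : glue i g h = glue i' g' h' := congrArg Subtype.val heq
    have hi : i = i' := by
      apply Fin.ext
      rw [← cnt_glue i g h, ← cnt_glue i' g' h', hval]
    subst hi
    have hg : g = g' := by
      apply Subtype.ext
      funext u
      have hu : u.1 < a := lt_of_lt_of_le u.2 (by have := i.2; omega)
      have h1 := glue_lt i g h ⟨u.1, hu⟩ u.2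
      have h2 := glue_lt i g' h' ⟨u.1, hu⟩ u.2
      rw [hval] at h1
      rw [h2] at h1
      exact (by simpa using h1.symm)
    have hh : h = h' := by
      apply Subtype.ext
      funext v
      have hv : i.1 + v.1 < a := by have := v.2; have := i.2; omega
      have e1 : glue i g h ⟨i.1 + v.1, hv⟩ = h.1 v := by
        rw [glue_ge i g h ⟨i.1 + v.1, hv⟩ (by show ¬ i.1 + v.1 < i.1; omega)]
        exact congrArg h.1 (Fin.ext (by show i.1 + v.1 - i.1 = v.1; omega))
      have e2 : glue i g' h' ⟨i.1 + v.1, hv⟩ = h'.1 v := by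
        rw [glue_ge i g' h' ⟨i.1 + v.1, hv⟩ (by show ¬ i.1 + v.1 < i.1; omega)]
        exact congrArg h'.1 (Fin.ext (by show i.1 + v.1 - i.1 = v.1; omega))
      rw [← e1, ← e2, hval]
    rw [hg, hh]
  · intro f
    exact ⟨⟨⟨cnt M f.1, Nat.lt_succ_of_le (cnt_le f.1)⟩, front L M f, back L M f⟩,
      glueMap_front_back hLM f⟩

/-- the split equivalence. -/
noncomputable def splitEquiv (a L M : ℕ) (hLM : L ≤ M + 1) : SIdx a L M ≃ CL a L :=
  Equiv.ofBijective _ (glueMap_bijective hLM)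

lemma splitEquiv_apply {a L M : ℕ} (hLM : L ≤ M + 1) (x : SIdx a L M) :
    splitEquiv a L M hLM x = glueMap hLM x := rfl



/-- the index of the middle entry. -/
def emid (a b : ℕ) : Fin (a + 1 + b) := ⟨a, by omega⟩

def exGlue {a b : ℕ} (m : ℕ+) (g : CB a 1 m.1) (h : CL b m.1) : Fin (a + 1 + b) → ℕ :=
  fun t => if h1 : t.1 < a then g.1 ⟨t.1, h1⟩
    else if h2 : t.1 < a + 1 then m.1
    else h.1 ⟨t.1 - (a + 1), by have := t.2; omega⟩

lemma exGlue_lt {a b : ℕ} (m : ℕ+) (g : CB a 1 m.1) (h : CL b m.1) (t : Fin (a + 1 + b))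
    (ht : t.1 < a) : exGlue m g h t = g.1 ⟨t.1, ht⟩ := dif_pos ht

lemma exGlue_mid {a b : ℕ} (m : ℕ+) (g : CB a 1 m.1) (h : CL b m.1) (t : Fin (a + 1 + b))
    (ht : t.1 = a) : exGlue m g h t = m.1 := by
  rw [exGlue, dif_neg (by omega), dif_pos (by omega)]

lemma exGlue_ge {a b : ℕ} (m : ℕ+) (g : CB a 1 m.1) (h : CL b m.1) (t : Fin (a + 1 + b))
    (ht : a + 1 ≤ t.1) :
    exGlue m g h t = h.1 ⟨t.1 - (a + 1), by have := t.2; omega⟩ := by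
  rw [exGlue, dif_neg (by omega), dif_neg (by omega)]

lemma exGlue_val {a b : ℕ} (m : ℕ+) (g : CB a 1 m.1) (h : CL b m.1) (t : Fin (a + 1 + b)) :
    (t.1 < a ∧ exGlue m g h t ≤ m.1) ∨ (t.1 = a ∧ exGlue m g h t = m.1) ∨
      (a + 1 ≤ t.1 ∧ m.1 ≤ exGlue m g h t) := by
  rcases lt_trichotomy t.1 a with ht | ht | ht
  · exact Or.inl ⟨ht, by rw [exGlue_lt m g h t ht]; exact (g.2.2 _).2⟩
  · exact Or.inr (Or.inl ⟨ht, exGlue_mid m g h t ht⟩)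
  · exact Or.inr (Or.inr ⟨ht, by rw [exGlue_ge m g h t ht]; exact h.2.2 _⟩)

lemma exGlue_mono {a b : ℕ} (m : ℕ+) (g : CB a 1 m.1) (h : CL b m.1) :
    Monotone (exGlue m g h) := by
  intro t u htu
  have htu' : t.1 ≤ u.1 := htu
  rcases lt_trichotomy t.1 a with ht | ht | ht <;> rcases lt_trichotomy u.1 a with hu | hu | hu
  · rw [exGlue_lt m g h t ht, exGlue_lt m g h u hu]
    exact g.2.1 (show (⟨t.1, ht⟩ : Fin a) ≤ ⟨u.1, hu⟩ from htu')
  · rw [exGlue_lt m g h t ht, exGlue_mid m g h u hu]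
    exact (g.2.2 _).2
  · rw [exGlue_lt m g h t ht, exGlue_ge m g h u (by omega)]
    exact le_trans (g.2.2 _).2 (h.2.2 _)
  · omega
  · rw [exGlue_mid m g h t ht, exGlue_mid m g h u hu]
  · rw [exGlue_mid m g h t ht, exGlue_ge m g h u (by omega)]
    exact h.2.2 _
  · omega
  · omega
  · rw [exGlue_ge m g h t (by omega), exGlue_ge m g h u (by omega)]
    exact h.2.1 (show t.1 - (a+1) ≤ u.1 - (a+1) by omega)

lemma exGlue_pos {a b : ℕ} (m : ℕ+) (g : CB a 1 m.1) (h : CL b m.1) (t : Fin (a + 1 + b)) :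
    1 ≤ exGlue m g h t := by
  rcases lt_trichotomy t.1 a with ht | ht | ht
  · rw [exGlue_lt m g h t ht]; exact (g.2.2 _).1
  · rw [exGlue_mid m g h t ht]; exact m.2
  · rw [exGlue_ge m g h t ht]; exact le_trans m.2 (h.2.2 _)

/-- the index type for the extraction at the middle position. -/
def EIdx (a b : ℕ) := Σ m : ℕ+, CB a 1 m.1 × CL b m.1

def exGlueMap {a b : ℕ} : EIdx a b → CL (a + 1 + b) 1 :=
  fun x => ⟨exGlue x.1 x.2.1 x.2.2, exGlue_mono _ _ _, exGlue_pos _ _ _⟩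

lemma exGlueMap_bijective {a b : ℕ} : Function.Bijective (exGlueMap (a := a) (b := b)) := by
  constructor
  · rintro ⟨m, g, h⟩ ⟨m', g', h'⟩ heq
    have hval : exGlue m g h = exGlue m' g' h' := congrArg Subtype.val heq
    have hm : m = m' := by
      have hc := congrFun hval (emid a b)
      rw [exGlue_mid m g h (emid a b) rfl, exGlue_mid m' g' h' (emid a b) rfl] at hc
      exact PNat.coe_injective hc
    subst hm
    have hg : g = g' := by
      apply Subtype.ext
      funext u
      have hu : u.1 < a + 1 + b := by have := u.2; omega
      have e1 : exGlue m g h ⟨u.1, hu⟩ = g.1 u := by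
        rw [exGlue_lt m g h ⟨u.1, hu⟩ u.2]
      have e2 : exGlue m g' h' ⟨u.1, hu⟩ = g'.1 u := by
        rw [exGlue_lt m g' h' ⟨u.1, hu⟩ u.2]
      rw [← e1, ← e2, hval]
    have hh : h = h' := by
      apply Subtype.ext
      funext v
      have hv : a + 1 + v.1 < a + 1 + b := by have := v.2; omega
      have e1 : exGlue m g h ⟨a + 1 + v.1, hv⟩ = h.1 v := by
        rw [exGlue_ge m g h ⟨a + 1 + v.1, hv⟩ (by show a + 1 ≤ a + 1 + v.1; omega)]
        exact congrArg h.1 (Fin.ext (by show a + 1 + v.1 - (a + 1) = v.1; omega))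
      have e2 : exGlue m g' h' ⟨a + 1 + v.1, hv⟩ = h'.1 v := by
        rw [exGlue_ge m g' h' ⟨a + 1 + v.1, hv⟩ (by show a + 1 ≤ a + 1 + v.1; omega)]
        exact congrArg h'.1 (Fin.ext (by show a + 1 + v.1 - (a + 1) = v.1; omega))
      rw [← e1, ← e2, hval]
    rw [hg, hh]
  · intro f
    refine ⟨⟨⟨f.1 (emid a b), f.2.2 _⟩,
      ⟨fun u => f.1 ⟨u.1, by have := u.2; omega⟩, ?_, ?_⟩,
      ⟨fun v => f.1 ⟨a + 1 + v.1, by have := v.2; omega⟩, ?_, ?_⟩⟩, ?_⟩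
    · intro u v huv
      exact f.2.1 (show (⟨u.1, _⟩ : Fin (a+1+b)) ≤ ⟨v.1, _⟩ from huv)
    · intro u
      refine ⟨f.2.2 _, ?_⟩
      show f.1 _ ≤ f.1 (emid a b)
      exact f.2.1 (show (u.1 : ℕ) ≤ a from u.2.le)
    · intro u v huv
      exact f.2.1 (show a + 1 + u.1 ≤ a + 1 + v.1 from Nat.add_le_add_left huv _)
    · intro v
      show f.1 (emid a b) ≤ f.1 _
      exact f.2.1 (show (a : ℕ) ≤ a + 1 + v.1 by omega)
    · apply Subtype.ext
      funext t
      show exGlue _ _ _ t = f.1 t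
      rcases lt_trichotomy t.1 a with ht | ht | ht
      · rw [exGlue_lt _ _ _ t ht]
      · refine (exGlue_mid _ _ _ t ht).trans ?_
        exact (congrArg f.1 (Fin.ext ht.symm) : f.1 (emid a b) = f.1 t)
      · rw [exGlue_ge _ _ _ t (by omega)]
        exact congrArg f.1 (Fin.ext (by show a + 1 + (t.1 - (a + 1)) = t.1; omega))

/-- the extract equivalence. -/
noncomputable def extractEquiv (a b : ℕ) : EIdx a b ≃ CL (a + 1 + b) 1 :=
  Equiv.ofBijective _ exGlueMap_bijective

lemma extractEquiv_apply {a b : ℕ} (x : EIdx a b) :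
    extractEquiv a b x = exGlueMap x := rfl


/-! ### Weights and sums -/

noncomputable def W (s : ℕ) {a : ℕ} (f : Fin a → ℕ) : ℝ≥0∞ := ∏ i, ((f i : ℝ≥0∞) ^ s)⁻¹

noncomputable def ZL (s a L : ℕ) : ℝ≥0∞ := ∑' f : CL a L, W s f.1
noncomputable def ZB (s a L M : ℕ) : ℝ≥0∞ := ∑' f : CB a L M, W s f.1

noncomputable def zE {m : ℕ} (α : Fin m → ℕ) : ℝ≥0∞ :=
  ∑' f : {f : Fin m → ℕ // Monotone f ∧ ∀ i, 0 < f i}, ∏ i, ((f.1 i : ℝ≥0∞) ^ α i)⁻¹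

noncomputable def rzE (e : ℕ) : ℝ≥0∞ := ∑' k : ℕ+, (((k:ℕ) : ℝ≥0∞) ^ e)⁻¹

def pat (s r a b : ℕ) : Fin (a + 1 + b) → ℕ :=
  Fin.append (Fin.append (fun _ : Fin a => s) ![r]) (fun _ : Fin b => s)

noncomputable def MixW (s r a b : ℕ) (f : Fin (a + 1 + b) → ℕ) : ℝ≥0∞ :=
  ∏ t, ((f t : ℝ≥0∞) ^ (pat s r a b t))⁻¹

noncomputable def MixZ (s r a b : ℕ) : ℝ≥0∞ := ∑' f : CL (a + 1 + b) 1, MixW s r a b f.1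

lemma pat_apply (s r a b : ℕ) (t : Fin (a + 1 + b)) :
    pat s r a b t = if t.1 = a then r else s := by
  rcases lt_trichotomy t.1 a with ht | ht | ht
  · have : t = Fin.castAdd b (Fin.castAdd 1 ⟨t.1, ht⟩) := Fin.ext rfl
    rw [this, pat, Fin.append_left, Fin.append_left, if_neg (by simpa using ht.ne)]
  · have : t = Fin.castAdd b (Fin.natAdd a (0 : Fin 1)) := Fin.ext (by simp [ht])
    rw [this, pat, Fin.append_left, Fin.append_right, if_pos (by simp)]
    rfl
  · have : t = Fin.natAdd (a + 1) ⟨t.1 - (a + 1), by have := t.2; omega⟩ :=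
      Fin.ext (by show t.1 = a + 1 + (t.1 - (a + 1)); omega)
    rw [this, pat, Fin.append_right, if_neg (by show ¬ a + 1 + (t.1 - (a+1)) = a; omega)]

/-! ### Weight preservation -/

lemma W_glueMap {a L M : ℕ} (s : ℕ) (hLM : L ≤ M + 1) (x : SIdx a L M) :
    W s (glueMap hLM x).1 = W s x.2.1.1 * W s x.2.2.1 := by
  obtain ⟨i, g, h⟩ := x
  show W s (glue i g h) = W s g.1 * W s h.1
  have hsum : i.1 + (a - i.1) = a := by have := i.2; omega
  have step1 : W s (glue i g h)
      = ∏ t : Fin (i.1 + (a - i.1)), ((glue i g h (Fin.cast hsum t) : ℝ≥0∞) ^ s)⁻¹ :=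
    (Fintype.prod_equiv (finCongr hsum)
      (fun t => ((glue i g h (Fin.cast hsum t) : ℝ≥0∞) ^ s)⁻¹)
      (fun t => ((glue i g h t : ℝ≥0∞) ^ s)⁻¹) (fun t => rfl)).symm
  rw [step1, Fin.prod_univ_add]
  congr 1
  · refine Finset.prod_congr rfl fun u _ => ?_
    rw [glue_lt i g h (Fin.cast hsum (Fin.castAdd _ u)) u.2]
    rfl
  · refine Finset.prod_congr rfl fun v _ => ?_
    rw [glue_ge i g h (Fin.cast hsum (Fin.natAdd i.1 v)) (show ¬ i.1 + v.1 < i.1 by omega)]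
    exact congrArg (fun x : ℕ => ((x : ℝ≥0∞) ^ s)⁻¹)
      (congrArg h.1 (Fin.ext (show i.1 + v.1 - i.1 = v.1 by omega)))

lemma MixW_exGlueMap (s r : ℕ) {a b : ℕ} (x : EIdx a b) :
    MixW s r a b (exGlueMap x).1
      = W s x.2.1.1 * (((x.1 : ℕ) : ℝ≥0∞) ^ r)⁻¹ * W s x.2.2.1 := by
  obtain ⟨m, g, h⟩ := x
  show MixW s r a b (exGlue m g h) = W s g.1 * (((m:ℕ) : ℝ≥0∞) ^ r)⁻¹ * W s h.1
  rw [MixW, Fin.prod_univ_add, Fin.prod_univ_castSucc]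
  congr 1
  · congr 1
    · refine Finset.prod_congr rfl fun u _ => ?_
      rw [pat_apply, if_neg (by show ¬ (u.1 : ℕ) = a; have := u.2; omega),
        exGlue_lt m g h _ (show (u.1 : ℕ) < a from u.2)]
      rfl
    · rw [pat_apply, exGlue_mid m g h (Fin.castAdd b (Fin.last a)) rfl]
      simp only [Fin.coe_castAdd, Fin.val_last, if_pos]
      rfl
  · refine Finset.prod_congr rfl fun j _ => ?_
    rw [pat_apply, if_neg (by show ¬ (a + 1 + j.1) = a; omega),
      exGlue_ge m g h _ (show a + 1 ≤ a + 1 + j.1 by omega)]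
    exact congrArg (fun x : ℕ => ((x : ℝ≥0∞) ^ s)⁻¹)
      (congrArg h.1 (Fin.ext (show a + 1 + j.1 - (a + 1) = j.1 by omega)))

/-! ### tsum identities -/

lemma tsum_mul_tsum {X Y : Type*} (u : X → ℝ≥0∞) (v : Y → ℝ≥0∞) :
    ∑' p : X × Y, u p.1 * v p.2 = (∑' x, u x) * ∑' y, v y := by
  rw [ENNReal.tsum_prod']
  simp_rw [ENNReal.tsum_mul_left]
  rw [ENNReal.tsum_mul_right]

lemma splitSum (s a L M : ℕ) (hLM : L ≤ M + 1) :
    ZL s a L = ∑ p ∈ Finset.HasAntidiagonal.antidiagonal a, ZB s p.1 L M * ZL s p.2 (M + 1) := by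
  have h1 : ZL s a L = ∑' x : SIdx a L M, W s (glueMap hLM x).1 :=
    ((splitEquiv a L M hLM).tsum_eq fun f : CL a L => W s f.1).symm
  rw [h1]
  have h2 : ∀ x : SIdx a L M, W s (glueMap hLM x).1 = W s x.2.1.1 * W s x.2.2.1 :=
    W_glueMap s hLM
  calc ∑' x : SIdx a L M, W s (glueMap hLM x).1
      = ∑' i : Fin (a+1), ∑' gh : CB i.1 L M × CL (a - i.1) (M+1), W s gh.1.1 * W s gh.2.1 := by
        rw [← ENNReal.tsum_sigma]
        exact tsum_congr fun x => h2 x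
    _ = ∑' i : Fin (a+1), ZB s i.1 L M * ZL s (a - i.1) (M+1) :=
        tsum_congr fun i => tsum_mul_tsum (fun g : CB i.1 L M => W s g.1)
          (fun h : CL (a - i.1) (M+1) => W s h.1)
    _ = ∑ i : Fin (a+1), ZB s i.1 L M * ZL s (a - i.1) (M+1) := tsum_fintype _
    _ = ∑ i ∈ Finset.range (a+1), ZB s i L M * ZL s (a - i) (M+1) :=
        Fin.sum_univ_eq_sum_range (fun i => ZB s i L M * ZL s (a - i) (M+1)) (a+1)
    _ = ∑ p ∈ Finset.HasAntidiagonal.antidiagonal a, ZB s p.1 L M * ZL s p.2 (M + 1) := by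
        rw [Finset.Nat.sum_antidiagonal_eq_sum_range_succ_mk]

lemma extractSum (s r a b : ℕ) :
    MixZ s r a b
      = ∑' m : ℕ+, ZB s a 1 m * (((m:ℕ) : ℝ≥0∞) ^ r)⁻¹ * ZL s b m := by
  have h1 : MixZ s r a b = ∑' x : EIdx a b, MixW s r a b (exGlueMap x).1 :=
    ((extractEquiv a b).tsum_eq fun f : CL (a+1+b) 1 => MixW s r a b f.1).symm
  rw [h1]
  calc ∑' x : EIdx a b, MixW s r a b (exGlueMap x).1
      = ∑' m : ℕ+, ∑' gh : CB a 1 m.1 × CL b m.1,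
          W s gh.1.1 * (((m:ℕ) : ℝ≥0∞) ^ r)⁻¹ * W s gh.2.1 := by
        rw [← ENNReal.tsum_sigma]
        exact tsum_congr fun x => MixW_exGlueMap s r x
    _ = ∑' m : ℕ+, ZB s a 1 m * (((m:ℕ) : ℝ≥0∞) ^ r)⁻¹ * ZL s b m := by
        refine tsum_congr fun m => ?_
        calc ∑' gh : CB a 1 m.1 × CL b m.1, W s gh.1.1 * (((m:ℕ) : ℝ≥0∞) ^ r)⁻¹ * W s gh.2.1
            = ∑' gh : CB a 1 m.1 × CL b m.1, ((((m:ℕ) : ℝ≥0∞) ^ r)⁻¹) * (W s gh.1.1 * W s gh.2.1) := by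
              refine tsum_congr fun gh => by ring
          _ = ((((m:ℕ) : ℝ≥0∞) ^ r)⁻¹) * (ZB s a 1 m * ZL s b m) := by
              rw [ENNReal.tsum_mul_left,
                tsum_mul_tsum (fun g : CB a 1 m.1 => W s g.1) (fun h : CL b m.1 => W s h.1)]
              rfl
          _ = ZB s a 1 m * (((m:ℕ) : ℝ≥0∞) ^ r)⁻¹ * ZL s b m := by ring

lemma ZB_const (s j v : ℕ) :
    ZB s j v v = (((v : ℝ≥0∞)) ^ s)⁻¹ ^ j := by
  have hconst : ∀ f : CB j v v,
      f = (⟨fun _ => v, monotone_const, fun i => ⟨le_refl _, le_refl _⟩⟩ : CB j v v) :=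
    fun f => Subtype.ext (funext fun i => le_antisymm (f.2.2 i).2 (f.2.2 i).1)
  have h := tsum_eq_single (L := SummationFilter.unconditional _) (f := fun f : CB j v v => W s f.1)
    (⟨fun _ => v, monotone_const, fun i => ⟨le_refl _, le_refl _⟩⟩ : CB j v v)
    (fun f hf => absurd (hconst f) hf)
  rw [ZB, h]
  simp only [W]
  rw [Finset.prod_const, Finset.card_univ, Fintype.card_fin]

lemma ZL_zero (s L : ℕ) : ZL s 0 L = 1 := by
  have hconst : ∀ f : CL 0 L,
      f = (⟨fun i => i.elim0, fun i => i.elim0, fun i => i.elim0⟩ : CL 0 L) :=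
    fun f => Subtype.ext (funext fun i => i.elim0)
  have h := tsum_eq_single (L := SummationFilter.unconditional _) (f := fun f : CL 0 L => W s f.1)
    (⟨fun i => i.elim0, fun i => i.elim0, fun i => i.elim0⟩ : CL 0 L)
    (fun f hf => absurd (hconst f) hf)
  rw [ZL, h]
  simp only [W]
  simp


/-! ### transfer to ℝ -/

lemma term_ne_top {m : ℕ} (α : Fin m → ℕ) (f : Fin m → ℕ) (hf : ∀ i, 0 < f i) :
    (∏ i, ((f i : ℝ≥0∞) ^ α i)⁻¹) ≠ ∞ := by
  refine (ENNReal.prod_lt_top ?_).ne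
  intro i _
  rw [ENNReal.inv_lt_top]
  exact pos_iff_ne_zero.mpr (pow_ne_zero _ (Nat.cast_ne_zero.mpr (hf i).ne'))

lemma mzs_eq {m : ℕ} (α : Fin m → ℕ) : mzs α = (zE α).toReal := by
  rw [zE]
  have h := ENNReal.tsum_toReal_eq
    (f := fun f : {f : Fin m → ℕ // Monotone f ∧ ∀ i, 0 < f i} =>
      ∏ i, ((f.1 i : ℝ≥0∞) ^ α i)⁻¹)
    (fun f => term_ne_top α f.1 f.2.2)
  rw [h]
  refine tsum_congr fun f => ?_
  rw [ENNReal.toReal_prod]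
  refine Finset.prod_congr rfl fun i _ => ?_
  rw [ENNReal.toReal_inv, ENNReal.toReal_pow, ENNReal.toReal_natCast]

lemma rz_eq (e : ℕ) : rz e = (rzE e).toReal := by
  rw [rzE, ENNReal.tsum_toReal_eq]
  · refine tsum_congr fun k => ?_
    rw [ENNReal.toReal_inv, ENNReal.toReal_pow, ENNReal.toReal_natCast]
  · intro k
    rw [ENNReal.inv_ne_top]
    exact pow_ne_zero _ (Nat.cast_ne_zero.mpr k.2.ne')

lemma rzE_ne_top {e : ℕ} (he : 2 ≤ e) : rzE e ≠ ∞ := by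
  have hsum : Summable (fun k : ℕ+ => ((k : ℝ) ^ e)⁻¹) := by
    have h1 : Summable (fun n : ℕ => 1 / (n : ℝ) ^ e) :=
      Real.summable_one_div_nat_pow.mpr (by omega)
    exact (by simpa [one_div] using h1 : Summable fun n : ℕ => ((n:ℝ) ^ e)⁻¹).comp_injective (fun a b h => PNat.coe_injective h)
  have : rzE e = ENNReal.ofReal (∑' k : ℕ+, ((k : ℝ) ^ e)⁻¹) := by
    rw [ENNReal.ofReal_tsum_of_nonneg (fun k => by positivity) hsum]
    refine tsum_congr fun k => ?_
    rw [ENNReal.ofReal_inv_of_pos (by positivity), ENNReal.ofReal_pow (by positivity),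
      ENNReal.ofReal_natCast]
  rw [this]
  exact ENNReal.ofReal_ne_top

/-! ### finiteness -/

lemma ZB_le_ZL (s a M : ℕ) : ZB s a 1 M ≤ ZL s a 1 := by
  have hinj : Function.Injective
      (fun f : CB a 1 M => (⟨f.1, f.2.1, fun i => (f.2.2 i).1⟩ : CL a 1)) := by
    intro f g hfg
    exact Subtype.ext (congrArg (fun x : CL a 1 => x.1) hfg)
  exact ENNReal.tsum_comp_le_tsum_of_injective hinj (fun x : CL a 1 => W s x.1)

lemma ZL_le_ZL (s a : ℕ) {L : ℕ} (hL : 1 ≤ L) : ZL s a L ≤ ZL s a 1 := by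
  have hinj : Function.Injective
      (fun f : CL a L => (⟨f.1, f.2.1, fun i => le_trans hL (f.2.2 i)⟩ : CL a 1)) := by
    intro f g hfg
    exact Subtype.ext (congrArg (fun x : CL a 1 => x.1) hfg)
  exact ENNReal.tsum_comp_le_tsum_of_injective hinj (fun x : CL a 1 => W s x.1)

lemma ZL_succ_eq (s a : ℕ) : ZL s (a + 1) 1 = MixZ s s a 0 := by
  rw [ZL, MixZ]
  refine tsum_congr fun f => ?_
  simp only [W, MixW]
  refine Finset.prod_congr rfl fun t _ => ?_
  rw [pat_apply, ite_self]

lemma ZL_ne_top {s : ℕ} (hs : 2 ≤ s) : ∀ a, ZL s a 1 ≠ ∞ := by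
  intro a
  induction a with
  | zero => rw [ZL_zero]; exact ENNReal.one_ne_top
  | succ a ih =>
    rw [ZL_succ_eq, extractSum]
    have hb : ∀ m : ℕ+, ZB s a 1 m * (((m:ℕ) : ℝ≥0∞) ^ s)⁻¹ * ZL s 0 m
        ≤ ZL s a 1 * (((m:ℕ) : ℝ≥0∞) ^ s)⁻¹ := by
      intro m
      rw [ZL_zero, mul_one]
      exact mul_le_mul_left (ZB_le_ZL s a m) _
    refine ne_top_of_le_ne_top ?_ (Summable.tsum_le_tsum hb ENNReal.summable ENNReal.summable)
    rw [ENNReal.tsum_mul_left]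
    exact ENNReal.mul_ne_top ih (rzE_ne_top hs)

lemma MixZ_ne_top {s r : ℕ} (hs : 2 ≤ s) (hr : 2 ≤ r) (a b : ℕ) : MixZ s r a b ≠ ∞ := by
  rw [extractSum]
  have hb : ∀ m : ℕ+, ZB s a 1 m * (((m:ℕ) : ℝ≥0∞) ^ r)⁻¹ * ZL s b m
      ≤ ZL s a 1 * ZL s b 1 * (((m:ℕ) : ℝ≥0∞) ^ r)⁻¹ := by
    intro m
    calc ZB s a 1 m * (((m:ℕ) : ℝ≥0∞) ^ r)⁻¹ * ZL s b m
        ≤ ZL s a 1 * (((m:ℕ) : ℝ≥0∞) ^ r)⁻¹ * ZL s b 1 :=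
          mul_le_mul' (mul_le_mul_left (ZB_le_ZL s a m) _) (ZL_le_ZL s b m.2)
      _ = ZL s a 1 * ZL s b 1 * (((m:ℕ) : ℝ≥0∞) ^ r)⁻¹ := by ring
  refine ne_top_of_le_ne_top ?_ (Summable.tsum_le_tsum hb ENNReal.summable ENNReal.summable)
  rw [ENNReal.tsum_mul_left]
  exact ENNReal.mul_ne_top (ENNReal.mul_ne_top (ZL_ne_top hs a) (ZL_ne_top hs b))
    (rzE_ne_top hr)

/-! ### the main ENNReal identity -/

lemma rzE_split (s r b : ℕ) :
    rzE (s * b + r) = ∑' m : ℕ+,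
      ((((m:ℕ) : ℝ≥0∞) ^ s)⁻¹) ^ b * (((m:ℕ) : ℝ≥0∞) ^ r)⁻¹ := by
  rw [rzE]
  refine tsum_congr fun m => ?_
  have hm0 : ((m:ℕ) : ℝ≥0∞) ≠ 0 := Nat.cast_ne_zero.mpr m.2.ne'
  rw [pow_add, pow_mul, ENNReal.mul_inv (Or.inl (pow_ne_zero _ (pow_ne_zero _ hm0)))
    (Or.inr (pow_ne_zero _ hm0)), ENNReal.inv_pow]

lemma per_m (s r n : ℕ) (m : ℕ+) :
    ∑ ab ∈ Finset.HasAntidiagonal.antidiagonal n,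
      ZL s ab.1 1 * (((((m:ℕ) : ℝ≥0∞) ^ s)⁻¹) ^ ab.2 * (((m:ℕ) : ℝ≥0∞) ^ r)⁻¹)
    = ∑ ab ∈ Finset.HasAntidiagonal.antidiagonal n,
      ZB s ab.1 1 m * (((m:ℕ) : ℝ≥0∞) ^ r)⁻¹ * ZL s ab.2 m := by
  have hsplit1 : ∀ a : ℕ, ZL s a 1
      = ∑ p ∈ Finset.HasAntidiagonal.antidiagonal a, ZB s p.1 1 (m:ℕ) * ZL s p.2 ((m:ℕ) + 1) :=
    fun a => splitSum s a 1 (m:ℕ) (by omega)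
  have hsplit2 : ∀ b : ℕ, ZL s b (m:ℕ)
      = ∑ p ∈ Finset.HasAntidiagonal.antidiagonal b,
          ((((m:ℕ) : ℝ≥0∞) ^ s)⁻¹) ^ p.1 * ZL s p.2 ((m:ℕ) + 1) := by
    intro b
    rw [splitSum s b (m:ℕ) (m:ℕ) (by omega)]
    exact Finset.sum_congr rfl fun p _ => by rw [ZB_const]
  have hps : PowerSeries.mk (fun i => ZB s i 1 (m:ℕ))
        * PowerSeries.mk (fun c => ZL s c ((m:ℕ) + 1))
        * PowerSeries.mk (fun j => ((((m:ℕ) : ℝ≥0∞) ^ s)⁻¹) ^ j)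
      = PowerSeries.mk (fun i => ZB s i 1 (m:ℕ))
        * (PowerSeries.mk (fun j => ((((m:ℕ) : ℝ≥0∞) ^ s)⁻¹) ^ j)
          * PowerSeries.mk (fun c => ZL s c ((m:ℕ) + 1))) := by
    ring
  calc ∑ ab ∈ Finset.HasAntidiagonal.antidiagonal n,
        ZL s ab.1 1 * (((((m:ℕ) : ℝ≥0∞) ^ s)⁻¹) ^ ab.2 * (((m:ℕ) : ℝ≥0∞) ^ r)⁻¹)
      = (((m:ℕ) : ℝ≥0∞) ^ r)⁻¹ * PowerSeries.coeff (R := ℝ≥0∞) n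
          (PowerSeries.mk (fun i => ZB s i 1 (m:ℕ))
            * PowerSeries.mk (fun c => ZL s c ((m:ℕ) + 1))
            * PowerSeries.mk (fun j => ((((m:ℕ) : ℝ≥0∞) ^ s)⁻¹) ^ j)) := by
        rw [PowerSeries.coeff_mul, Finset.mul_sum]
        refine Finset.sum_congr rfl fun ab _ => ?_
        rw [PowerSeries.coeff_mul, hsplit1 ab.1]
        simp only [PowerSeries.coeff_mk]
        ring
    _ = (((m:ℕ) : ℝ≥0∞) ^ r)⁻¹ * PowerSeries.coeff (R := ℝ≥0∞) n
          (PowerSeries.mk (fun i => ZB s i 1 (m:ℕ))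
            * (PowerSeries.mk (fun j => ((((m:ℕ) : ℝ≥0∞) ^ s)⁻¹) ^ j)
              * PowerSeries.mk (fun c => ZL s c ((m:ℕ) + 1)))) := by rw [hps]
    _ = ∑ ab ∈ Finset.HasAntidiagonal.antidiagonal n,
          ZB s ab.1 1 m * (((m:ℕ) : ℝ≥0∞) ^ r)⁻¹ * ZL s ab.2 m := by
        rw [PowerSeries.coeff_mul, Finset.mul_sum]
        refine Finset.sum_congr rfl fun ab _ => ?_
        rw [PowerSeries.coeff_mul, hsplit2 ab.2]
        simp only [PowerSeries.coeff_mk]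
        ring

theorem mainE (n s r : ℕ) :
    ∑ ab ∈ Finset.HasAntidiagonal.antidiagonal n, ZL s ab.1 1 * rzE (s * ab.2 + r)
      = ∑ ab ∈ Finset.HasAntidiagonal.antidiagonal n, MixZ s r ab.1 ab.2 := by
  calc ∑ ab ∈ Finset.HasAntidiagonal.antidiagonal n, ZL s ab.1 1 * rzE (s * ab.2 + r)
      = ∑ ab ∈ Finset.HasAntidiagonal.antidiagonal n, ∑' m : ℕ+,
          ZL s ab.1 1 * (((((m:ℕ) : ℝ≥0∞) ^ s)⁻¹) ^ ab.2 * (((m:ℕ) : ℝ≥0∞) ^ r)⁻¹) := by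
        refine Finset.sum_congr rfl fun ab _ => ?_
        rw [rzE_split, ENNReal.tsum_mul_left]
    _ = ∑' m : ℕ+, ∑ ab ∈ Finset.HasAntidiagonal.antidiagonal n,
          ZL s ab.1 1 * (((((m:ℕ) : ℝ≥0∞) ^ s)⁻¹) ^ ab.2 * (((m:ℕ) : ℝ≥0∞) ^ r)⁻¹) :=
        (Summable.tsum_finsetSum fun _ _ => ENNReal.summable).symm
    _ = ∑' m : ℕ+, ∑ ab ∈ Finset.HasAntidiagonal.antidiagonal n,
          ZB s ab.1 1 m * (((m:ℕ) : ℝ≥0∞) ^ r)⁻¹ * ZL s ab.2 m :=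
        tsum_congr fun m => per_m s r n m
    _ = ∑ ab ∈ Finset.HasAntidiagonal.antidiagonal n, ∑' m : ℕ+,
          ZB s ab.1 1 m * (((m:ℕ) : ℝ≥0∞) ^ r)⁻¹ * ZL s ab.2 m :=
        Summable.tsum_finsetSum fun _ _ => ENNReal.summable
    _ = ∑ ab ∈ Finset.HasAntidiagonal.antidiagonal n, MixZ s r ab.1 ab.2 :=
        Finset.sum_congr rfl fun ab _ => (extractSum s r ab.1 ab.2).symm

end S4

theorem stmt4 (n s r : ℕ) (hs : 2 ≤ s) (hr : 2 ≤ r) :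
    ∑ ab ∈ Finset.HasAntidiagonal.antidiagonal n,
        mzs (fun _ : Fin ab.1 => s) * rz (s * ab.2 + r) =
      ∑ ab ∈ Finset.HasAntidiagonal.antidiagonal n,
        mzs (Fin.append (Fin.append (fun _ : Fin ab.1 => s) ![r])
          (fun _ : Fin ab.2 => s)) := by
  have hrne : ∀ b : ℕ, S4.rzE (s * b + r) ≠ ∞ := fun b => S4.rzE_ne_top (by omega)
  calc ∑ ab ∈ Finset.HasAntidiagonal.antidiagonal n, mzs (fun _ : Fin ab.1 => s) * rz (s * ab.2 + r)
      = ∑ ab ∈ Finset.HasAntidiagonal.antidiagonal n,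
          (S4.ZL s ab.1 1 * S4.rzE (s * ab.2 + r)).toReal := by
        refine Finset.sum_congr rfl fun ab _ => ?_
        rw [S4.mzs_eq, S4.rz_eq, ENNReal.toReal_mul]
        rfl
    _ = (∑ ab ∈ Finset.HasAntidiagonal.antidiagonal n, S4.ZL s ab.1 1 * S4.rzE (s * ab.2 + r)).toReal :=
        (ENNReal.toReal_sum fun ab _ =>
          ENNReal.mul_ne_top (S4.ZL_ne_top hs ab.1) (hrne ab.2)).symm
    _ = (∑ ab ∈ Finset.HasAntidiagonal.antidiagonal n, S4.MixZ s r ab.1 ab.2).toReal := by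
        rw [S4.mainE n s r]
    _ = ∑ ab ∈ Finset.HasAntidiagonal.antidiagonal n, (S4.MixZ s r ab.1 ab.2).toReal :=
        ENNReal.toReal_sum fun ab _ => S4.MixZ_ne_top hs hr ab.1 ab.2
    _ = ∑ ab ∈ Finset.HasAntidiagonal.antidiagonal n,
          mzs (Fin.append (Fin.append (fun _ : Fin ab.1 => s) ![r])
            (fun _ : Fin ab.2 => s)) := by
        refine Finset.sum_congr rfl fun ab _ => ?_
        rw [S4.mzs_eq]
        rfl
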